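/- If σ ≥ Δ·κ(δ, ε) with κ(δ, ε) = (1/(2ε))(K_δ + √(K_δ² + 2ε)) and K_δ = Q⁻¹(δ), then the single-shot Gaussian mechanism on ℝ is (ε, δ)-differentially private for queries with sensitivity Δ: for any a, ã ∈ ℝ with |a − ã| ≤ Δ and any measurable S ⊆ ℝ, P(a + w ∈ S) ≤ e^ε P(ã + w ∈ S) + δ, where w ~ N(0, σ²). -/

import Mathlib

open MeasureTheory ProbabilityTheory Set
open scoped NNReal ENNReal

noncomputable def Qfun (x : ℝ) : ℝ :=
  (1 / Real.sqrt (2 * Real.pi)) * ∫ u in Set.Ioi x, Real.exp (-u ^ 2 / 2)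

lemma expneg_integrable : Integrable (fun u : ℝ => Real.exp (-u ^ 2 / 2)) := by
  have h := integrable_exp_neg_mul_sq (by norm_num : (0:ℝ) < 1/2)
  refine h.congr (Filter.Eventually.of_forall fun x => ?_)
  ring_nf

lemma Qfun_anti {x y : ℝ} (hxy : x ≤ y) : Qfun y ≤ Qfun x := by
  unfold Qfun
  have h := expneg_integrable
  have key : (∫ u in Ioi y, Real.exp (-u ^ 2 / 2)) ≤ ∫ u in Ioi x, Real.exp (-u ^ 2 / 2) :=
    setIntegral_mono_set h.integrableOn
      (Filter.Eventually.of_forall fun u => (Real.exp_pos _).le)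
      (Filter.Eventually.of_forall (Ioi_subset_Ioi hxy))
  exact mul_le_mul_of_nonneg_left key (by positivity)

-- translation for Ioi integrals
lemma integral_comp_sub_Ioi (g : ℝ → ℝ) (a m : ℝ) :
    ∫ x in Ioi a, g (x - m) = ∫ x in Ioi (a - m), g x := by
  rw [← integral_indicator measurableSet_Ioi, ← integral_indicator measurableSet_Ioi]
  have : (fun x => Ioi a |>.indicator (fun y => g (y - m)) x)
      = fun x => Ioi (a - m) |>.indicator g (x - m) := by
    ext x
    by_cases hx : x ∈ Ioi a
    · rw [indicator_of_mem hx, indicator_of_mem (by simpa [sub_lt_sub_iff_right] using hx)]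
    · rw [indicator_of_notMem hx, indicator_of_notMem (by simpa [sub_lt_sub_iff_right] using hx)]
  rw [this, integral_sub_right_eq_self (fun x => Ioi (a - m) |>.indicator g x) m]

lemma gauss_Ioi (m x σ : ℝ) (hσ : 0 < σ) :
    gaussianReal m (Real.toNNReal (σ ^ 2)) (Ioi x)
      = ENNReal.ofReal (Qfun ((x - m) / σ)) := by
  have hv : Real.toNNReal (σ ^ 2) ≠ 0 := by
    simp [Real.toNNReal_eq_zero, not_le, pow_pos hσ, hσ.ne']
  rw [gaussianReal_apply_eq_integral _ hv]
  congr 1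
  have hvr : ((Real.toNNReal (σ ^ 2) : ℝ≥0) : ℝ) = σ ^ 2 :=
    Real.coe_toNNReal _ (sq_nonneg σ)
  have h1 : ∀ y : ℝ, gaussianPDFReal m (Real.toNNReal (σ ^ 2)) y
      = (Real.sqrt (2 * Real.pi) * σ)⁻¹ * Real.exp (-((y - m)/σ) ^ 2 / 2) := by
    intro y
    rw [gaussianPDFReal, hvr]
    have : Real.sqrt (2 * Real.pi * σ ^ 2) = Real.sqrt (2 * Real.pi) * σ := by
      rw [Real.sqrt_mul (by positivity), Real.sqrt_sq hσ.le]
    rw [this]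
    congr 1
    rw [div_pow]
    ring
  simp_rw [h1]
  rw [integral_const_mul]
  have h2 : ∫ y in Ioi x, Real.exp (-((y - m)/σ) ^ 2 / 2)
      = σ * ∫ u in Ioi ((x - m)/σ), Real.exp (-u ^ 2 / 2) := by
    have h3 : ∫ y in Ioi x, Real.exp (-((y - m)/σ) ^ 2 / 2)
        = ∫ y in Ioi (x - m), Real.exp (-(y * σ⁻¹) ^ 2 / 2) := by
      rw [← integral_comp_sub_Ioi (fun y => Real.exp (-(y * σ⁻¹) ^ 2 / 2)) x m]
      simp only [div_eq_mul_inv]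
    rw [h3]
    have h4 := integral_comp_mul_right_Ioi (fun u => Real.exp (-u ^ 2 / 2)) (x - m)
      (inv_pos.mpr hσ)
    simp only [smul_eq_mul, inv_inv] at h4
    rw [h4]
    rw [div_eq_mul_inv]
  rw [h2, Qfun]
  rw [← mul_assoc]
  congr 1
  field_simp

lemma gauss_Iio (m x σ : ℝ) (hσ : 0 < σ) :
    gaussianReal m (Real.toNNReal (σ ^ 2)) (Iio x)
      = ENNReal.ofReal (Qfun ((m - x) / σ)) := by
  have hmap := gaussianReal_map_const_mul (μ := m) (v := Real.toNNReal (σ ^ 2)) (-1)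
  have hmeas : Measurable (fun y : ℝ => -1 * y) := (measurable_id.const_mul _)
  have h1 : gaussianReal m (Real.toNNReal (σ ^ 2)) (Iio x)
      = ((gaussianReal m (Real.toNNReal (σ ^ 2))).map ((-1 : ℝ) * ·)) (Ioi (-x)) := by
    rw [Measure.map_apply hmeas measurableSet_Ioi]
    congr 1
    ext y
    simp [neg_lt, lt_neg]
  rw [h1, hmap]
  have : (NNReal.mk ((-1 : ℝ)^2) (sq_nonneg _) * Real.toNNReal (σ ^ 2) : ℝ≥0)
      = Real.toNNReal (σ ^ 2) := by
    ext; norm_num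
  rw [this, gauss_Ioi _ _ _ hσ]
  congr 2
  ring

lemma sigma_pos {ε Δ Kδ σ : ℝ} (hε : 0 < ε) (hΔ : 0 < Δ)
    (hσ : σ ≥ Δ * ((1 / (2 * ε)) * (Kδ + Real.sqrt (Kδ ^ 2 + 2 * ε)))) : 0 < σ := by
  have hs : Real.sqrt (Kδ ^ 2 + 2 * ε) > |Kδ| := by
    rw [← Real.sqrt_sq_eq_abs]
    exact Real.sqrt_lt_sqrt (sq_nonneg _) (by linarith)
  have h1 : Kδ + Real.sqrt (Kδ ^ 2 + 2 * ε) > 0 := by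
    have := abs_nonneg Kδ
    have := neg_abs_le Kδ
    linarith
  have : Δ * ((1 / (2 * ε)) * (Kδ + Real.sqrt (Kδ ^ 2 + 2 * ε))) > 0 := by positivity
  linarith

lemma alg_key {ε Δ Kδ σ : ℝ} (hε : 0 < ε) (hΔ : 0 < Δ)
    (hσ : σ ≥ Δ * ((1 / (2 * ε)) * (Kδ + Real.sqrt (Kδ ^ 2 + 2 * ε))))
    {t : ℝ} (ht : 0 < t) (htΔ : t ≤ Δ) :
    Kδ ≤ ε * σ / t - t / (2 * σ) := by
  have hσ0 : 0 < σ := sigma_pos hε hΔ hσ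
  set s := Real.sqrt (Kδ ^ 2 + 2 * ε) with hs
  have hs0 : 0 ≤ s := Real.sqrt_nonneg _
  have hs2 : s ^ 2 = Kδ ^ 2 + 2 * ε := Real.sq_sqrt (by positivity)
  have h1 : 2 * ε * σ ≥ Δ * (Kδ + s) := by
    have h2 : Δ * (Kδ + s) ≤ σ * (2 * ε) :=
      calc Δ * (Kδ + s) = Δ * ((1 / (2 * ε)) * (Kδ + s)) * (2 * ε) := by field_simp
        _ ≤ σ * (2 * ε) := mul_le_mul_of_nonneg_right hσ (by positivity)
    linarith
  -- key quadratic inequality at Δ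
  have hΔkey : 2 * ε * σ ^ 2 - Δ ^ 2 ≥ 2 * Kδ * Δ * σ := by
    have h3 : 2 * ε * σ - Δ * Kδ ≥ Δ * s := by nlinarith
    have h4 : (2 * ε * σ - Δ * Kδ) ^ 2 ≥ (Δ * s) ^ 2 := by
      nlinarith [mul_nonneg hΔ.le hs0]
    nlinarith [sq_nonneg (2 * ε * σ - Δ * Kδ), mul_pos hε hσ0]
  have htkey : 2 * ε * σ ^ 2 - t ^ 2 ≥ 2 * Kδ * t * σ := by
    nlinarith [mul_nonneg (sub_nonneg.mpr htΔ) (mul_pos hε (mul_pos hσ0 hσ0)).le,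
      mul_nonneg (mul_nonneg ht.le hΔ.le) (sub_nonneg.mpr htΔ),
      mul_nonneg ht.le (by linarith : (0:ℝ) ≤ 2 * ε * σ ^ 2 - Δ ^ 2 - 2 * Kδ * Δ * σ)]
  rw [← sub_nonneg]
  have expand : ε * σ / t - t / (2 * σ) - Kδ
      = (2 * ε * σ ^ 2 - t ^ 2 - 2 * Kδ * t * σ) / (2 * t * σ) := by
    field_simp
  rw [expand]
  exact div_nonneg (by linarith) (by positivity)

theorem gaussian_mechanism_dp (ε δ Δ Kδ σ : ℝ)
    (hε : 0 < ε) (hδ₁ : 0 < δ) (hδ₂ : δ < 1 / 2)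
    (hKδ : Qfun Kδ = δ) (hΔ : 0 < Δ)
    (hσ : σ ≥ Δ * ((1 / (2 * ε)) * (Kδ + Real.sqrt (Kδ ^ 2 + 2 * ε)))) :
    ∀ a a2 : ℝ, |a - a2| ≤ Δ →
      ∀ S : Set ℝ, MeasurableSet S →
        gaussianReal a (Real.toNNReal (σ ^ 2)) S ≤
          ENNReal.ofReal (Real.exp ε) * gaussianReal a2 (Real.toNNReal (σ ^ 2)) S +
            ENNReal.ofReal δ := by
  intro a a2 habs S _hS
  have hσ0 : 0 < σ := sigma_pos hε hΔ hσ
  have hv : Real.toNNReal (σ ^ 2) ≠ 0 := by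
    simp [Real.toNNReal_eq_zero, not_le, pow_pos hσ0, hσ0.ne']
  have hvr : ((Real.toNNReal (σ ^ 2) : ℝ≥0) : ℝ) = σ ^ 2 :=
    Real.coe_toNNReal _ (sq_nonneg σ)
  set c := a - a2 with hc
  set B : Set ℝ := {x : ℝ | 2 * ε * σ ^ 2 < c * (2 * x - a - a2)} with hBdef
  have hsplit : gaussianReal a (Real.toNNReal (σ ^ 2)) S
      ≤ gaussianReal a (Real.toNNReal (σ ^ 2)) (S ∩ Bᶜ)
        + gaussianReal a (Real.toNNReal (σ ^ 2)) B := by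
    refine le_trans (measure_mono (fun x hx => ?_)) (measure_union_le _ _)
    by_cases hxB : x ∈ B
    · exact Or.inr hxB
    · exact Or.inl ⟨hx, hxB⟩
  have hgood : gaussianReal a (Real.toNNReal (σ ^ 2)) (S ∩ Bᶜ)
      ≤ ENNReal.ofReal (Real.exp ε) * gaussianReal a2 (Real.toNNReal (σ ^ 2)) S := by
    rw [gaussianReal_apply _ hv, gaussianReal_apply _ hv]
    calc ∫⁻ x in S ∩ Bᶜ, gaussianPDF a (Real.toNNReal (σ ^ 2)) x
        ≤ ∫⁻ x in S ∩ Bᶜ,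
            ENNReal.ofReal (Real.exp ε) * gaussianPDF a2 (Real.toNNReal (σ ^ 2)) x := by
          refine setLIntegral_mono
            ((measurable_gaussianPDF a2 _).const_mul _) fun x hx => ?_
          have hxB : c * (2 * x - a - a2) ≤ 2 * ε * σ ^ 2 := by
            have := hx.2
            simp only [hBdef, mem_compl_iff, mem_setOf_eq, not_lt] at this
            exact this
          unfold gaussianPDF
          rw [← ENNReal.ofReal_mul (Real.exp_nonneg ε)]
          apply ENNReal.ofReal_le_ofReal
          rw [gaussianPDFReal, gaussianPDFReal, hvr]
          have hC : (0:ℝ) ≤ (Real.sqrt (2 * Real.pi * σ ^ 2))⁻¹ := by positivity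
          have hexp : Real.exp (-(x - a) ^ 2 / (2 * σ ^ 2))
              ≤ Real.exp ε * Real.exp (-(x - a2) ^ 2 / (2 * σ ^ 2)) := by
            rw [← Real.exp_add]
            apply Real.exp_le_exp.mpr
            have hnum : -(x - a) ^ 2 ≤ ε * (2 * σ ^ 2) + -(x - a2) ^ 2 := by
              have hid : (x - a2) ^ 2 - (x - a) ^ 2 = c * (2 * x - a - a2) := by
                rw [hc]; ring
              nlinarith
            have key : -(x - a) ^ 2 / (2 * σ ^ 2)
                ≤ (ε * (2 * σ ^ 2) + -(x - a2) ^ 2) / (2 * σ ^ 2) := by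
              gcongr
            have : (ε * (2 * σ ^ 2) + -(x - a2) ^ 2) / (2 * σ ^ 2)
                = ε + -(x - a2) ^ 2 / (2 * σ ^ 2) := by
              field_simp
            linarith
          calc (Real.sqrt (2 * Real.pi * σ ^ 2))⁻¹ * Real.exp (-(x - a) ^ 2 / (2 * σ ^ 2))
              ≤ (Real.sqrt (2 * Real.pi * σ ^ 2))⁻¹
                  * (Real.exp ε * Real.exp (-(x - a2) ^ 2 / (2 * σ ^ 2))) :=
                mul_le_mul_of_nonneg_left hexp hC
            _ = Real.exp ε * ((Real.sqrt (2 * Real.pi * σ ^ 2))⁻¹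
                  * Real.exp (-(x - a2) ^ 2 / (2 * σ ^ 2))) := by ring
      _ = ENNReal.ofReal (Real.exp ε)
            * ∫⁻ x in S ∩ Bᶜ, gaussianPDF a2 (Real.toNNReal (σ ^ 2)) x :=
          lintegral_const_mul _ (measurable_gaussianPDF a2 _)
      _ ≤ ENNReal.ofReal (Real.exp ε) * ∫⁻ x in S, gaussianPDF a2 (Real.toNNReal (σ ^ 2)) x :=
          mul_le_mul_right (lintegral_mono_set inter_subset_left) _
  have hcΔ : |c| ≤ Δ := habs
  have hbad : gaussianReal a (Real.toNNReal (σ ^ 2)) B ≤ ENNReal.ofReal δ := by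
    rcases lt_trichotomy c 0 with hc0 | hc0 | hc0
    · -- c < 0 : B = Iio r
      set r : ℝ := (2 * ε * σ ^ 2 / c + a + a2) / 2 with hr
      have hBr : B = Iio r := by
        ext x
        simp only [hBdef, mem_setOf_eq, mem_Iio]
        rw [mul_comm c, ← lt_div_iff_of_neg hc0]
        constructor
        · intro h; rw [hr]; linarith
        · intro h; rw [hr] at h; linarith
      rw [hBr, gauss_Iio a r σ hσ0, ← hKδ]
      apply ENNReal.ofReal_le_ofReal
      apply Qfun_anti
      have ht : 0 < -c := by linarith
      have htΔ : -c ≤ Δ := by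
        have := neg_abs_le c; have := le_abs_self c; linarith [abs_nonneg c, hcΔ]
      have hcne : c ≠ 0 := ne_of_lt hc0
      have ha2 : a2 = a - c := by rw [hc]; ring
      have harg : (a - r) / σ = ε * σ / (-c) - (-c) / (2 * σ) := by
        rw [hr, ha2]
        field_simp
        ring
      rw [harg]
      exact alg_key hε hΔ hσ ht htΔ
    · -- c = 0 : B = ∅
      have hBe : B = ∅ := by
        ext x
        simp only [hBdef, hc0, zero_mul, mem_setOf_eq, mem_empty_iff_false, iff_false, not_lt]
        positivity
      rw [hBe]
      simp [hδ₁.le]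
    · -- c > 0 : B = Ioi r
      set r : ℝ := (2 * ε * σ ^ 2 / c + a + a2) / 2 with hr
      have hBr : B = Ioi r := by
        ext x
        simp only [hBdef, mem_setOf_eq, mem_Ioi]
        rw [mul_comm c, ← div_lt_iff₀ hc0]
        constructor
        · intro h; rw [hr]; linarith
        · intro h; rw [hr] at h; linarith
      rw [hBr, gauss_Ioi a r σ hσ0, ← hKδ]
      apply ENNReal.ofReal_le_ofReal
      apply Qfun_anti
      have htΔ : c ≤ Δ := (le_abs_self c).trans hcΔ
      have hcne : c ≠ 0 := ne_of_gt hc0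
      have ha2 : a2 = a - c := by rw [hc]; ring
      have harg : (r - a) / σ = ε * σ / c - c / (2 * σ) := by
        rw [hr, ha2]
        field_simp
        ring
      rw [harg]
      exact alg_key hε hΔ hσ hc0 htΔ
  calc gaussianReal a (Real.toNNReal (σ ^ 2)) S
      ≤ gaussianReal a (Real.toNNReal (σ ^ 2)) (S ∩ Bᶜ)
        + gaussianReal a (Real.toNNReal (σ ^ 2)) B := hsplit
    _ ≤ ENNReal.ofReal (Real.exp ε) * gaussianReal a2 (Real.toNNReal (σ ^ 2)) S
        + ENNReal.ofReal δ := add_le_add hgood hbad
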